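/- Assume m and l′ are both even (case (ii)). Then the set Δ_{s^{−1}} = {α ∈ Δ₊ : s^{−1}α ∈ Δ₋} consists exactly of the following roots: α_1 + α_2; the roots α_{2t} + α_{2t+1} + α_{2t+2} for 1 ≤ t ≤ (m−2)/2; the roots α_m + α_{m+1} + ⋯ + α_{m+q} for 1 ≤ q ≤ p; the root γ′ = α_m + ⋯ + α_{m+p+2}; the roots α_i + α_{i+1} + ⋯ + α_{m+p+2} for m+2 ≤ i ≤ m+p+2; the roots α_{m+p+2t} + α_{m+p+2t+1} + α_{m+p+2t+2} for 1 ≤ t ≤ m/2; and the simple roots α_2, α_4, …, α_m and α_{m+p+2}, α_{m+p+4}, …, α_{m+p+m+2}. -/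

import Mathlib

/- Common framework: type A_l root system realized in ℝ^{ℕ} (coordinates 1,…,l+1 used),
   the Weyl group as permutations of ℕ acting by permuting coordinates, and the
   Weyl group element s = s₁s₂ of Proposition 4.2 (all four parity cases). -/

noncomputable section

namespace DPW

/-- The ambient vector space (only coordinates 1,…,l+1 are used). -/
abbrev V : Type := ℕ → ℝ

/-- Standard basis vector e_i. -/
def evec (i : ℕ) : V := fun j => if j = i then 1 else 0

/-- The root e_i − e_j. -/
def rt (i j : ℕ) : V := evec i - evec j

/-- The root system Δ of type A_l. -/
def Delta (l : ℕ) : Set V :=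
  {v | ∃ i j, 1 ≤ i ∧ i ≤ l + 1 ∧ 1 ≤ j ∧ j ≤ l + 1 ∧ i ≠ j ∧ v = rt i j}

/-- Positive roots Δ₊. -/
def DeltaPos (l : ℕ) : Set V :=
  {v | ∃ i j, 1 ≤ i ∧ i < j ∧ j ≤ l + 1 ∧ v = rt i j}

/-- Negative roots Δ₋ = −Δ₊. -/
def DeltaNeg (l : ℕ) : Set V := {v | -v ∈ DeltaPos l}

/-- Action of a permutation on V : (σ·v)_j = v_{σ⁻¹(j)}. -/
def pact (σ : Equiv.Perm ℕ) (v : V) : V := fun j => v (σ⁻¹ j)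

/-- row(e_a − e_b) = a. -/
def rowOf (v : V) : ℕ := sInf {a | v a = 1}

/-- col(e_a − e_b) = b. -/
def colOf (v : V) : ℕ := sInf {b | v b = (-1 : ℝ)}

/-- Product of the simple reflections s_{α_i} = (i, i+1) for i in a list. -/
def swapProd (idxs : List ℕ) : Equiv.Perm ℕ :=
  (idxs.map (fun i => Equiv.swap i (i + 1))).prod

/-- The Weyl group element s = s₁s₂ (cases (i)–(iv) according to the parities of
    m = ⌊(l′−1)/2⌋ and l′; here p = l − l′ and s_γ = (m+1, m+p+2)). -/
def weylS (l l' : ℕ) : Equiv.Perm ℕ :=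
  let m := (l' - 1) / 2
  let p := l - l'
  if m % 2 = 0 then
    if l' % 2 = 1 then
      -- case (i)
      (swapProd (List.range' 2 (m / 2) 2) * swapProd (List.range' (m + p + 2) (m / 2) 2)) *
        (swapProd (List.range' 1 (m / 2) 2) * Equiv.swap (m + 1) (m + p + 2) *
          swapProd (List.range' (m + p + 3) (m / 2) 2))
    else
      -- case (ii)
      (swapProd (List.range' 2 (m / 2) 2) * swapProd (List.range' (m + p + 2) (m / 2 + 1) 2)) *
        (swapProd (List.range' 1 (m / 2) 2) * Equiv.swap (m + 1) (m + p + 2) *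
          swapProd (List.range' (m + p + 3) (m / 2) 2))
  else
    if l' % 2 = 1 then
      -- case (iii)
      (swapProd (List.range' 1 ((m + 1) / 2) 2) *
          swapProd (List.range' (m + p + 2) ((m + 1) / 2) 2)) *
        (swapProd (List.range' 2 ((m - 1) / 2) 2) * Equiv.swap (m + 1) (m + p + 2) *
          swapProd (List.range' (m + p + 3) ((m - 1) / 2) 2))
    else
      -- case (iv)
      (swapProd (List.range' 1 ((m + 1) / 2) 2) *
          swapProd (List.range' (m + p + 2) ((m + 1) / 2) 2)) *
        (swapProd (List.range' 2 ((m - 1) / 2) 2) * Equiv.swap (m + 1) (m + p + 2) *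
          swapProd (List.range' (m + p + 3) ((m + 1) / 2) 2))

/-- Δ_s = {α ∈ Δ₊ : sα ∈ Δ₋}. -/
def DeltaS (l : ℕ) (s : Equiv.Perm ℕ) : Set V :=
  {v ∈ DeltaPos l | pact s v ∈ DeltaNeg l}

/-- Δ_{s⁻¹} = {α ∈ Δ₊ : s⁻¹α ∈ Δ₋}. -/
def DeltaSinv (l : ℕ) (s : Equiv.Perm ℕ) : Set V :=
  {v ∈ DeltaPos l | pact s⁻¹ v ∈ DeltaNeg l}

/-- (Δ̄_K)₊ = {α ∈ Δ₊ : sα ≠ α}. -/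
def DeltaKpos (l : ℕ) (s : Equiv.Perm ℕ) : Set V :=
  {v ∈ DeltaPos l | pact s v ≠ v}

/-- (Δ̄_K)₋ = −(Δ̄_K)₊. -/
def DeltaKneg (l : ℕ) (s : Equiv.Perm ℕ) : Set V := {v | -v ∈ DeltaKpos l s}

/-- Δ^C = {α ∈ (Δ̄_K)₊ : row(sα) = row(α)}. -/
def DeltaC (l : ℕ) (s : Equiv.Perm ℕ) : Set V :=
  {v ∈ DeltaKpos l s | rowOf (pact s v) = rowOf v}

/-- Δ^R = {α ∈ (Δ̄_K)₊ : col(sα) = col(α)}. -/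
def DeltaR (l : ℕ) (s : Equiv.Perm ℕ) : Set V :=
  {v ∈ DeltaKpos l s | colOf (pact s v) = colOf v}

/-- Δ^O = (Δ̄_K)₊ \ (Δ^C ∪ Δ^R). -/
def DeltaO (l : ℕ) (s : Equiv.Perm ℕ) : Set V :=
  DeltaKpos l s \ (DeltaC l s ∪ DeltaR l s)

/-- Δ₁^O = {α ∈ Δ^O : row(α) ≥ m+p+2}. -/
def DeltaO1 (l : ℕ) (s : Equiv.Perm ℕ) (m p : ℕ) : Set V :=
  {v ∈ DeltaO l s | m + p + 2 ≤ rowOf v}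

/-- Δ₂^O = {α ∈ Δ^O : col(α) ≤ m+1}. -/
def DeltaO2 (l : ℕ) (s : Equiv.Perm ℕ) (m : ℕ) : Set V :=
  {v ∈ DeltaO l s | colOf v ≤ m + 1}

/-- Δ₃^O = Δ^O \ (Δ₁^O ∪ Δ₂^O). -/
def DeltaO3 (l : ℕ) (s : Equiv.Perm ℕ) (m p : ℕ) : Set V :=
  DeltaO l s \ (DeltaO1 l s m p ∪ DeltaO2 l s m)

/-- Δ̄_K^k = {α ∈ (Δ̄_K)₊ : s^{−j}α ∈ (Δ̄_K)₊ for 1 ≤ j ≤ k−1 and s^{−k}α ∈ (Δ̄_K)₋}. -/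
def DeltaKk (l : ℕ) (s : Equiv.Perm ℕ) (k : ℕ) : Set V :=
  {v ∈ DeltaKpos l s |
    (∀ j, 1 ≤ j → j ≤ k - 1 → pact (s⁻¹ ^ j) v ∈ DeltaKpos l s) ∧
      pact (s⁻¹ ^ k) v ∈ DeltaKneg l s}

/-- d(α) = min{k ≥ 1 : s^{−k}α ∈ Δ₋}. -/
def dd (l : ℕ) (s : Equiv.Perm ℕ) (v : V) : ℕ :=
  sInf {k | 1 ≤ k ∧ pact (s⁻¹ ^ k) v ∈ DeltaNeg l}

/-- Δ_Z = {e_i − e_j : m+2 ≤ i, j ≤ m+p+1, i ≠ j}. -/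
def DeltaZ (m p : ℕ) : Set V :=
  {v | ∃ i j, m + 2 ≤ i ∧ i ≤ m + p + 1 ∧ m + 2 ≤ j ∧ j ≤ m + p + 1 ∧ i ≠ j ∧ v = rt i j}

/-- The ⟨s⟩-orbit of a vector. -/
def orbitOf (s : Equiv.Perm ℕ) (v : V) : Set V := {w | ∃ n : ℤ, w = pact (s ^ n) v}

/-- The set P_κ (for κ ∈ Δ̄_K^k). -/
def Pk (l : ℕ) (s : Equiv.Perm ℕ) (k : ℕ) (κ : V) : Set (V × V) :=
  {q | (∃ i, 2 ≤ i ∧ i ≤ k - 1 ∧ q.1 ∈ DeltaKk l s i) ∧ q.2 ∈ DeltaKk l s k ∧ κ = q.1 + q.2}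

/-- The set P′_κ (for κ ∈ Δ̄_K^k). -/
def Pk' (l : ℕ) (s : Equiv.Perm ℕ) (k : ℕ) (κ : V) : Set (V × V) :=
  {q | q.1 ∈ DeltaKk l s k ∧ q.2 ∈ DeltaKk l s k ∧ κ = q.1 + q.2}

/-- The eigenvector v^λ of case (i) (m even, l′ = 2m+1 odd). -/
def vlam (m p : ℕ) (lam : ℂ) : ℕ → ℂ := fun j =>
  if j = 0 then 0
  else if j ≤ m + 1 then
    (if j % 2 = 1 then lam ^ ((4 * m + 5 - j) / 2) else lam ^ (j / 2))
  else if j ≤ m + p + 1 then 0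
  else if j ≤ m + p + m + 2 then
    (if (j - (m + p)) % 2 = 0 then lam ^ ((m + (j - (m + p))) / 2)
     else lam ^ ((3 * m + 5 - (j - (m + p))) / 2))
  else 0



/-! ### Auxiliary machinery for stmt4 -/

/-- Explicit description of the action of `swapProd (List.range' a n 2)`. -/
def spFun (a n x : ℕ) : ℕ :=
  if a ≤ x ∧ x < a + 2 * n then (if (x - a) % 2 = 0 then x + 1 else x - 1) else x

lemma swapProd_cons (i : ℕ) (L : List ℕ) :
    swapProd (i :: L) = Equiv.swap i (i + 1) * swapProd L := by
  simp only [swapProd, List.map_cons, List.prod_cons]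

lemma swapProd_range' (n a x : ℕ) : swapProd (List.range' a n 2) x = spFun a n x := by
  induction n generalizing a with
  | zero =>
    simp only [List.range', swapProd, List.map_nil, List.prod_nil, Equiv.Perm.one_apply, spFun]
    split_ifs <;> first | exact (‹False›).elim | omega
  | succ n ih =>
    rw [List.range'_succ, swapProd_cons, Equiv.Perm.mul_apply, ih]
    rw [Equiv.swap_apply_def]
    simp only [spFun]
    split_ifs <;> first | exact (‹False›).elim | omega

/-- Explicit inverse of `weylS` in case (ii), on coordinates `1..2m+p+3`. -/
def gFun (m p x : ℕ) : ℕ :=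
  if x = 1 then 2
  else if x = m then m + p + 2
  else if x ≤ m + 1 then (if x % 2 = 1 then x - 2 else x + 2)
  else if x ≤ m + p + 1 then x
  else if x = m + p + 3 then m + 1
  else if x = m + p + m + 2 then m + p + m + 3
  else if x ≤ m + p + m + 3 then (if (x + m + p) % 2 = 0 then x + 2 else x - 2)
  else x

lemma weylS_eval (m p : ℕ) (hme : m % 2 = 0) (x : ℕ) :
    weylS (2 * m + 2 + p) (2 * m + 2) x =
      spFun 2 (m / 2) (spFun (m + p + 2) (m / 2 + 1) (spFun 1 (m / 2)
        (Equiv.swap (m + 1) (m + p + 2) (spFun (m + p + 3) (m / 2) x)))) := by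
  have h1 : (2 * m + 2 - 1) / 2 = m := by omega
  have h2 : 2 * m + 2 + p - (2 * m + 2) = p := by omega
  have e1 : (2 * m + 2 - 1) / 2 % 2 = 0 := by omega
  have e2 : ¬ ((2 * m + 2) % 2 = 1) := by omega
  simp only [weylS, h1, h2, e1, e2, if_true, if_false, reduceIte]
  rw [if_pos hme]
  simp only [Equiv.Perm.mul_apply, swapProd_range']

set_option maxHeartbeats 4000000 in
lemma sg_chain (m p : ℕ) (hme : m % 2 = 0) (hm2 : 2 ≤ m) (x : ℕ)
    (hx1 : 1 ≤ x) (hx2 : x ≤ 2 * m + p + 3) :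
    spFun 2 (m / 2) (spFun (m + p + 2) (m / 2 + 1) (spFun 1 (m / 2)
        (Equiv.swap (m + 1) (m + p + 2) (spFun (m + p + 3) (m / 2) (gFun m p x))))) = x := by
  have hc : (x = 1) ∨ (¬x = 1 ∧ x = m) ∨ (¬x = 1 ∧ ¬x = m ∧ x ≤ m + 1 ∧ x % 2 = 1) ∨ (¬x = 1 ∧ ¬x = m ∧ x ≤ m + 1 ∧ x % 2 = 0) ∨ (m + 1 < x ∧ x ≤ m + p + 1) ∨ (x = m + p + 3) ∨ (¬x = m + p + 3 ∧ x = m + p + m + 2) ∨ (m + p + 1 < x ∧ ¬x = m + p + 3 ∧ ¬x = m + p + m + 2 ∧ x ≤ m + p + m + 3 ∧ (x + m + p) % 2 = 0) ∨ (m + p + 1 < x ∧ ¬x = m + p + 3 ∧ ¬x = m + p + m + 2 ∧ x ≤ m + p + m + 3 ∧ (x + m + p) % 2 = 1) := by omega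
  rcases hc with h|h|h|h|h|h|h|h|h
  · -- region
    have hg : gFun m p x = 2 := by unfold gFun; split_ifs <;> first | exact (‹False›).elim | omega
    rw [hg]
    have t0 : spFun (m + p + 3) (m / 2) (2) = 2 := by unfold spFun; split_ifs <;> first | exact (‹False›).elim | omega
    rw [t0]
    have t1 : Equiv.swap (m + 1) (m + p + 2) (2) = 2 := by rw [Equiv.swap_apply_def]; split_ifs <;> first | exact (‹False›).elim | omega
    rw [t1]
    have t2 : spFun 1 (m / 2) (2) = 1 := by unfold spFun; split_ifs <;> first | exact (‹False›).elim | omega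
    rw [t2]
    have t3 : spFun (m + p + 2) (m / 2 + 1) (1) = 1 := by unfold spFun; split_ifs <;> first | exact (‹False›).elim | omega
    rw [t3]
    have t4 : spFun 2 (m / 2) (1) = 1 := by unfold spFun; split_ifs <;> first | exact (‹False›).elim | omega
    rw [t4]
    try omega
  · -- region
    have hg : gFun m p x = m + p + 2 := by unfold gFun; split_ifs <;> first | exact (‹False›).elim | omega
    rw [hg]
    have t0 : spFun (m + p + 3) (m / 2) (m + p + 2) = m + p + 2 := by unfold spFun; split_ifs <;> first | exact (‹False›).elim | omega
    rw [t0]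
    have t1 : Equiv.swap (m + 1) (m + p + 2) (m + p + 2) = m + 1 := by rw [Equiv.swap_apply_def]; split_ifs <;> first | exact (‹False›).elim | omega
    rw [t1]
    have t2 : spFun 1 (m / 2) (m + 1) = m + 1 := by unfold spFun; split_ifs <;> first | exact (‹False›).elim | omega
    rw [t2]
    have t3 : spFun (m + p + 2) (m / 2 + 1) (m + 1) = m + 1 := by unfold spFun; split_ifs <;> first | exact (‹False›).elim | omega
    rw [t3]
    have t4 : spFun 2 (m / 2) (m + 1) = m := by unfold spFun; split_ifs <;> first | exact (‹False›).elim | omega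
    rw [t4]
    try omega
  · -- region
    have hg : gFun m p x = x - 2 := by unfold gFun; split_ifs <;> first | exact (‹False›).elim | omega
    rw [hg]
    have t0 : spFun (m + p + 3) (m / 2) (x - 2) = x - 2 := by unfold spFun; split_ifs <;> first | exact (‹False›).elim | omega
    rw [t0]
    have t1 : Equiv.swap (m + 1) (m + p + 2) (x - 2) = x - 2 := by rw [Equiv.swap_apply_def]; split_ifs <;> first | exact (‹False›).elim | omega
    rw [t1]
    have t2 : spFun 1 (m / 2) (x - 2) = x - 2 + 1 := by unfold spFun; split_ifs <;> first | exact (‹False›).elim | omega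
    rw [t2]
    have t3 : spFun (m + p + 2) (m / 2 + 1) (x - 2 + 1) = x - 2 + 1 := by unfold spFun; split_ifs <;> first | exact (‹False›).elim | omega
    rw [t3]
    have t4 : spFun 2 (m / 2) (x - 2 + 1) = x - 2 + 1 + 1 := by unfold spFun; split_ifs <;> first | exact (‹False›).elim | omega
    rw [t4]
    try omega
  · -- region
    have hg : gFun m p x = x + 2 := by unfold gFun; split_ifs <;> first | exact (‹False›).elim | omega
    rw [hg]
    have t0 : spFun (m + p + 3) (m / 2) (x + 2) = x + 2 := by unfold spFun; split_ifs <;> first | exact (‹False›).elim | omega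
    rw [t0]
    have t1 : Equiv.swap (m + 1) (m + p + 2) (x + 2) = x + 2 := by rw [Equiv.swap_apply_def]; split_ifs <;> first | exact (‹False›).elim | omega
    rw [t1]
    have t2 : spFun 1 (m / 2) (x + 2) = x + 2 - 1 := by unfold spFun; split_ifs <;> first | exact (‹False›).elim | omega
    rw [t2]
    have t3 : spFun (m + p + 2) (m / 2 + 1) (x + 2 - 1) = x + 2 - 1 := by unfold spFun; split_ifs <;> first | exact (‹False›).elim | omega
    rw [t3]
    have t4 : spFun 2 (m / 2) (x + 2 - 1) = x + 2 - 1 - 1 := by unfold spFun; split_ifs <;> first | exact (‹False›).elim | omega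
    rw [t4]
    try omega
  · -- region
    have hg : gFun m p x = x := by unfold gFun; split_ifs <;> first | exact (‹False›).elim | omega
    rw [hg]
    have t0 : spFun (m + p + 3) (m / 2) (x) = x := by unfold spFun; split_ifs <;> first | exact (‹False›).elim | omega
    rw [t0]
    have t1 : Equiv.swap (m + 1) (m + p + 2) (x) = x := by rw [Equiv.swap_apply_def]; split_ifs <;> first | exact (‹False›).elim | omega
    rw [t1]
    have t2 : spFun 1 (m / 2) (x) = x := by unfold spFun; split_ifs <;> first | exact (‹False›).elim | omega
    rw [t2]
    have t3 : spFun (m + p + 2) (m / 2 + 1) (x) = x := by unfold spFun; split_ifs <;> first | exact (‹False›).elim | omega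
    rw [t3]
    have t4 : spFun 2 (m / 2) (x) = x := by unfold spFun; split_ifs <;> first | exact (‹False›).elim | omega
    rw [t4]
    try omega
  · -- region
    have hg : gFun m p x = m + 1 := by unfold gFun; split_ifs <;> first | exact (‹False›).elim | omega
    rw [hg]
    have t0 : spFun (m + p + 3) (m / 2) (m + 1) = m + 1 := by unfold spFun; split_ifs <;> first | exact (‹False›).elim | omega
    rw [t0]
    have t1 : Equiv.swap (m + 1) (m + p + 2) (m + 1) = m + p + 2 := by rw [Equiv.swap_apply_def]; split_ifs <;> first | exact (‹False›).elim | omega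
    rw [t1]
    have t2 : spFun 1 (m / 2) (m + p + 2) = m + p + 2 := by unfold spFun; split_ifs <;> first | exact (‹False›).elim | omega
    rw [t2]
    have t3 : spFun (m + p + 2) (m / 2 + 1) (m + p + 2) = m + p + 2 + 1 := by unfold spFun; split_ifs <;> first | exact (‹False›).elim | omega
    rw [t3]
    have t4 : spFun 2 (m / 2) (m + p + 2 + 1) = m + p + 2 + 1 := by unfold spFun; split_ifs <;> first | exact (‹False›).elim | omega
    rw [t4]
    try omega
  · -- region
    have hg : gFun m p x = m + p + m + 3 := by unfold gFun; split_ifs <;> first | exact (‹False›).elim | omega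
    rw [hg]
    have t0 : spFun (m + p + 3) (m / 2) (m + p + m + 3) = m + p + m + 3 := by unfold spFun; split_ifs <;> first | exact (‹False›).elim | omega
    rw [t0]
    have t1 : Equiv.swap (m + 1) (m + p + 2) (m + p + m + 3) = m + p + m + 3 := by rw [Equiv.swap_apply_def]; split_ifs <;> first | exact (‹False›).elim | omega
    rw [t1]
    have t2 : spFun 1 (m / 2) (m + p + m + 3) = m + p + m + 3 := by unfold spFun; split_ifs <;> first | exact (‹False›).elim | omega
    rw [t2]
    have t3 : spFun (m + p + 2) (m / 2 + 1) (m + p + m + 3) = m + p + m + 3 - 1 := by unfold spFun; split_ifs <;> first | exact (‹False›).elim | omega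
    rw [t3]
    have t4 : spFun 2 (m / 2) (m + p + m + 3 - 1) = m + p + m + 3 - 1 := by unfold spFun; split_ifs <;> first | exact (‹False›).elim | omega
    rw [t4]
    try omega
  · -- region
    have hg : gFun m p x = x + 2 := by unfold gFun; split_ifs <;> first | exact (‹False›).elim | omega
    rw [hg]
    have t0 : spFun (m + p + 3) (m / 2) (x + 2) = x + 2 - 1 := by unfold spFun; split_ifs <;> first | exact (‹False›).elim | omega
    rw [t0]
    have t1 : Equiv.swap (m + 1) (m + p + 2) (x + 2 - 1) = x + 2 - 1 := by rw [Equiv.swap_apply_def]; split_ifs <;> first | exact (‹False›).elim | omega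
    rw [t1]
    have t2 : spFun 1 (m / 2) (x + 2 - 1) = x + 2 - 1 := by unfold spFun; split_ifs <;> first | exact (‹False›).elim | omega
    rw [t2]
    have t3 : spFun (m + p + 2) (m / 2 + 1) (x + 2 - 1) = x + 2 - 1 - 1 := by unfold spFun; split_ifs <;> first | exact (‹False›).elim | omega
    rw [t3]
    have t4 : spFun 2 (m / 2) (x + 2 - 1 - 1) = x + 2 - 1 - 1 := by unfold spFun; split_ifs <;> first | exact (‹False›).elim | omega
    rw [t4]
    try omega
  · -- region
    have hg : gFun m p x = x - 2 := by unfold gFun; split_ifs <;> first | exact (‹False›).elim | omega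
    rw [hg]
    have t0 : spFun (m + p + 3) (m / 2) (x - 2) = x - 2 + 1 := by unfold spFun; split_ifs <;> first | exact (‹False›).elim | omega
    rw [t0]
    have t1 : Equiv.swap (m + 1) (m + p + 2) (x - 2 + 1) = x - 2 + 1 := by rw [Equiv.swap_apply_def]; split_ifs <;> first | exact (‹False›).elim | omega
    rw [t1]
    have t2 : spFun 1 (m / 2) (x - 2 + 1) = x - 2 + 1 := by unfold spFun; split_ifs <;> first | exact (‹False›).elim | omega
    rw [t2]
    have t3 : spFun (m + p + 2) (m / 2 + 1) (x - 2 + 1) = x - 2 + 1 + 1 := by unfold spFun; split_ifs <;> first | exact (‹False›).elim | omega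
    rw [t3]
    have t4 : spFun 2 (m / 2) (x - 2 + 1 + 1) = x - 2 + 1 + 1 := by unfold spFun; split_ifs <;> first | exact (‹False›).elim | omega
    rw [t4]
    try omega

lemma sg (m p : ℕ) (hme : m % 2 = 0) (hm2 : 2 ≤ m) (x : ℕ)
    (hx1 : 1 ≤ x) (hx2 : x ≤ 2 * m + p + 3) :
    weylS (2 * m + 2 + p) (2 * m + 2) (gFun m p x) = x := by
  rw [weylS_eval m p hme]
  exact sg_chain m p hme hm2 x hx1 hx2

lemma gFun_bounds (m p : ℕ) (hme : m % 2 = 0) (hm2 : 2 ≤ m) (x : ℕ)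
    (hx1 : 1 ≤ x) (hx2 : x ≤ 2 * m + p + 3) :
    1 ≤ gFun m p x ∧ gFun m p x ≤ 2 * m + p + 3 := by
  unfold gFun; split_ifs <;> first | exact (‹False›).elim | omega

lemma sinv_eq (m p : ℕ) (hme : m % 2 = 0) (hm2 : 2 ≤ m) (x : ℕ)
    (hx1 : 1 ≤ x) (hx2 : x ≤ 2 * m + p + 3) :
    (weylS (2 * m + 2 + p) (2 * m + 2))⁻¹ x = gFun m p x := by
  conv_lhs => rw [← sg m p hme hm2 x hx1 hx2]
  exact Equiv.symm_apply_apply _ _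

lemma pact_rt (σ : Equiv.Perm ℕ) (i j : ℕ) : pact σ (rt i j) = rt (σ i) (σ j) := by
  funext k
  have hiff : ∀ a b : ℕ, (σ⁻¹ a = b) ↔ (a = σ b) := by
    intro a b
    constructor
    · intro h; rw [← h]; simp
    · intro h; rw [h]; simp
  simp only [pact, rt, evec, Pi.sub_apply, hiff]

lemma neg_rt (u w : ℕ) : -rt u w = rt w u := by
  funext k; simp only [rt, evec, Pi.neg_apply, Pi.sub_apply]; ring

lemma rt_inj {i j a b : ℕ} (hij : i ≠ j) (hab : a ≠ b) (h : rt i j = rt a b) :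
    i = a ∧ j = b := by
  have h1 := congrFun h i
  have h2 := congrFun h j
  simp only [rt, evec, Pi.sub_apply] at h1 h2
  split_ifs at h1 h2 <;> grind

lemma rt_mem_DeltaNeg {l u w : ℕ} (huw : u ≠ w) :
    rt u w ∈ DeltaNeg l ↔ 1 ≤ w ∧ w < u ∧ u ≤ l + 1 := by
  constructor
  · rintro ⟨a, b, h1, h2, h3, h4⟩
    rw [neg_rt] at h4
    obtain ⟨rfl, rfl⟩ := rt_inj huw.symm (by omega) h4
    omega
  · rintro ⟨h1, h2, h3⟩
    exact ⟨w, u, h1, h2, h3, neg_rt u w⟩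

set_option maxHeartbeats 2000000 in
lemma gFun_spec (m p : ℕ) (hme : m % 2 = 0) (hm2 : 2 ≤ m) (x : ℕ)
    (hx1 : 1 ≤ x) (hx2 : x ≤ 2 * m + p + 3) :
    ∃ y, gFun m p x = y ∧
      ((x = 1 ∧ y = 2) ∨
      (x = m ∧ y = m + p + 2) ∨
      (3 ≤ x ∧ x ≤ m + 1 ∧ x % 2 = 1 ∧ y = x - 2) ∨
      (2 ≤ x ∧ x + 2 ≤ m ∧ x % 2 = 0 ∧ y = x + 2) ∨
      (m + 2 ≤ x ∧ x ≤ m + p + 1 ∧ y = x) ∨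
      (x = m + p + 3 ∧ y = m + 1) ∨
      (x = 2 * m + p + 2 ∧ y = 2 * m + p + 3) ∨
      (m + p + 2 ≤ x ∧ x ≤ 2 * m + p ∧ (x + m + p) % 2 = 0 ∧ y = x + 2) ∨
      (m + p + 5 ≤ x ∧ x ≤ 2 * m + p + 3 ∧ (x + m + p) % 2 = 1 ∧ y = x - 2)) := by
  have hc : (x = 1) ∨ (x = m) ∨ (3 ≤ x ∧ x ≤ m + 1 ∧ x % 2 = 1) ∨ (2 ≤ x ∧ x + 2 ≤ m ∧ x % 2 = 0) ∨ (m + 2 ≤ x ∧ x ≤ m + p + 1) ∨ (x = m + p + 3) ∨ (x = 2 * m + p + 2) ∨ (m + p + 2 ≤ x ∧ x ≤ 2 * m + p ∧ (x + m + p) % 2 = 0) ∨ (m + p + 5 ≤ x ∧ x ≤ 2 * m + p + 3 ∧ (x + m + p) % 2 = 1) := by omega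
  rcases hc with h|h|h|h|h|h|h|h|h
  · exact ⟨2, by unfold gFun; split_ifs <;> omega, Or.inl ⟨by omega, by omega⟩⟩
  · exact ⟨m + p + 2, by unfold gFun; split_ifs <;> omega, Or.inr (Or.inl ⟨by omega, by omega⟩)⟩
  · exact ⟨x - 2, by unfold gFun; split_ifs <;> omega, Or.inr (Or.inr (Or.inl ⟨by omega, by omega, by omega, by omega⟩))⟩
  · exact ⟨x + 2, by unfold gFun; split_ifs <;> omega, Or.inr (Or.inr (Or.inr (Or.inl ⟨by omega, by omega, by omega, by omega⟩)))⟩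
  · exact ⟨x, by unfold gFun; split_ifs <;> omega, Or.inr (Or.inr (Or.inr (Or.inr (Or.inl ⟨by omega, by omega, by omega⟩))))⟩
  · exact ⟨m + 1, by unfold gFun; split_ifs <;> omega, Or.inr (Or.inr (Or.inr (Or.inr (Or.inr (Or.inl ⟨by omega, by omega⟩)))))⟩
  · exact ⟨2 * m + p + 3, by unfold gFun; split_ifs <;> omega, Or.inr (Or.inr (Or.inr (Or.inr (Or.inr (Or.inr (Or.inl ⟨by omega, by omega⟩))))))⟩
  · exact ⟨x + 2, by unfold gFun; split_ifs <;> omega, Or.inr (Or.inr (Or.inr (Or.inr (Or.inr (Or.inr (Or.inr (Or.inl ⟨by omega, by omega, by omega, by omega⟩)))))))⟩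
  · exact ⟨x - 2, by unfold gFun; split_ifs <;> omega, Or.inr (Or.inr (Or.inr (Or.inr (Or.inr (Or.inr (Or.inr (Or.inr (⟨by omega, by omega, by omega, by omega⟩))))))))⟩

set_option maxHeartbeats 2000000 in
lemma inv_mp (m p : ℕ) (hme : m % 2 = 0) (hm2 : 2 ≤ m) (i j : ℕ)
    (h1 : 1 ≤ i) (h2 : i < j) (h3 : j ≤ 2 * m + p + 3)
    (hlt : gFun m p j < gFun m p i) :
    ((i = 1 ∧ j = 3) ∨
      (i % 2 = 0 ∧ 2 ≤ i ∧ i + 2 ≤ m ∧ j = i + 3) ∨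
      (i = m ∧ m + 2 ≤ j ∧ j ≤ m + p + 1) ∨
      (i = m ∧ j = m + p + 3) ∨
      (m + 2 ≤ i ∧ i ≤ m + p + 2 ∧ j = m + p + 3) ∨
      ((i + m + p) % 2 = 0 ∧ m + p + 2 ≤ i ∧ i ≤ m + p + m ∧ j = i + 3) ∨
      (i % 2 = 0 ∧ 2 ≤ i ∧ i ≤ m ∧ j = i + 1) ∨
      ((i + m + p) % 2 = 0 ∧ m + p + 2 ≤ i ∧ i ≤ m + p + m + 2 ∧ j = i + 1)) := by
  obtain ⟨yi, ei, hi⟩ := gFun_spec m p hme hm2 i h1 (by omega)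
  obtain ⟨yj, ej, hj⟩ := gFun_spec m p hme hm2 j (by omega) h3
  rw [ei, ej] at hlt
  rcases hi with hi|hi|hi|hi|hi|hi|hi|hi|hi <;> rcases hj with hj|hj|hj|hj|hj|hj|hj|hj|hj
  · exact absurd hlt (by omega)
  · exact absurd hlt (by omega)
  · exact Or.inl ⟨by omega, by omega⟩
  · exact absurd hlt (by omega)
  · exact absurd hlt (by omega)
  · exact absurd hlt (by omega)
  · exact absurd hlt (by omega)
  · exact absurd hlt (by omega)
  · exact absurd hlt (by omega)
  · exact absurd hlt (by omega)
  · exact absurd hlt (by omega)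
  · exact Or.inr (Or.inr (Or.inr (Or.inr (Or.inr (Or.inr (Or.inl ⟨by omega, by omega, by omega, by omega⟩))))))
  · exact absurd hlt (by omega)
  · exact Or.inr (Or.inr (Or.inl ⟨by omega, by omega, by omega⟩))
  · exact Or.inr (Or.inr (Or.inr (Or.inl ⟨by omega, by omega⟩)))
  · exact absurd hlt (by omega)
  · exact absurd hlt (by omega)
  · exact absurd hlt (by omega)
  · exact absurd hlt (by omega)
  · exact absurd hlt (by omega)
  · exact absurd hlt (by omega)
  · exact absurd hlt (by omega)
  · exact absurd hlt (by omega)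
  · exact absurd hlt (by omega)
  · exact absurd hlt (by omega)
  · exact absurd hlt (by omega)
  · exact absurd hlt (by omega)
  · exact absurd hlt (by omega)
  · exact absurd hlt (by omega)
  · have hd : (i % 2 = 0 ∧ 2 ≤ i ∧ i + 2 ≤ m ∧ j = i + 3) ∨ (i % 2 = 0 ∧ 2 ≤ i ∧ i ≤ m ∧ j = i + 1) := by omega
    rcases hd with hd|hd
    · exact Or.inr (Or.inl hd)
    · exact Or.inr (Or.inr (Or.inr (Or.inr (Or.inr (Or.inr (Or.inl hd))))))
  · exact absurd hlt (by omega)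
  · exact absurd hlt (by omega)
  · exact absurd hlt (by omega)
  · exact absurd hlt (by omega)
  · exact absurd hlt (by omega)
  · exact absurd hlt (by omega)
  · exact absurd hlt (by omega)
  · exact absurd hlt (by omega)
  · exact absurd hlt (by omega)
  · exact absurd hlt (by omega)
  · exact absurd hlt (by omega)
  · exact Or.inr (Or.inr (Or.inr (Or.inr (Or.inl ⟨by omega, by omega, by omega⟩))))
  · exact absurd hlt (by omega)
  · exact absurd hlt (by omega)
  · exact absurd hlt (by omega)
  · exact absurd hlt (by omega)
  · exact absurd hlt (by omega)
  · exact absurd hlt (by omega)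
  · exact absurd hlt (by omega)
  · exact absurd hlt (by omega)
  · exact absurd hlt (by omega)
  · exact absurd hlt (by omega)
  · exact absurd hlt (by omega)
  · exact absurd hlt (by omega)
  · exact absurd hlt (by omega)
  · exact absurd hlt (by omega)
  · exact absurd hlt (by omega)
  · exact absurd hlt (by omega)
  · exact absurd hlt (by omega)
  · exact absurd hlt (by omega)
  · exact absurd hlt (by omega)
  · exact absurd hlt (by omega)
  · exact Or.inr (Or.inr (Or.inr (Or.inr (Or.inr (Or.inr (Or.inr (⟨by omega, by omega, by omega, by omega⟩)))))))
  · exact absurd hlt (by omega)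
  · exact absurd hlt (by omega)
  · exact absurd hlt (by omega)
  · exact absurd hlt (by omega)
  · exact absurd hlt (by omega)
  · exact Or.inr (Or.inr (Or.inr (Or.inr (Or.inl ⟨by omega, by omega, by omega⟩))))
  · exact absurd hlt (by omega)
  · exact absurd hlt (by omega)
  · have hd : ((i + m + p) % 2 = 0 ∧ m + p + 2 ≤ i ∧ i ≤ m + p + m ∧ j = i + 3) ∨ ((i + m + p) % 2 = 0 ∧ m + p + 2 ≤ i ∧ i ≤ m + p + m + 2 ∧ j = i + 1) := by omega
    rcases hd with hd|hd
    · exact Or.inr (Or.inr (Or.inr (Or.inr (Or.inr (Or.inl hd)))))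
    · exact Or.inr (Or.inr (Or.inr (Or.inr (Or.inr (Or.inr (Or.inr (hd)))))))
  · exact absurd hlt (by omega)
  · exact absurd hlt (by omega)
  · exact absurd hlt (by omega)
  · exact absurd hlt (by omega)
  · exact absurd hlt (by omega)
  · exact absurd hlt (by omega)
  · exact absurd hlt (by omega)
  · exact absurd hlt (by omega)
  · exact absurd hlt (by omega)

set_option maxHeartbeats 2000000 in
lemma inv_mpr (m p : ℕ) (hme : m % 2 = 0) (hm2 : 2 ≤ m) (i j : ℕ)
    (h1 : 1 ≤ i) (h2 : i < j) (h3 : j ≤ 2 * m + p + 3)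
    (hQ : (i = 1 ∧ j = 3) ∨
      (i % 2 = 0 ∧ 2 ≤ i ∧ i + 2 ≤ m ∧ j = i + 3) ∨
      (i = m ∧ m + 2 ≤ j ∧ j ≤ m + p + 1) ∨
      (i = m ∧ j = m + p + 3) ∨
      (m + 2 ≤ i ∧ i ≤ m + p + 2 ∧ j = m + p + 3) ∨
      ((i + m + p) % 2 = 0 ∧ m + p + 2 ≤ i ∧ i ≤ m + p + m ∧ j = i + 3) ∨
      (i % 2 = 0 ∧ 2 ≤ i ∧ i ≤ m ∧ j = i + 1) ∨
      ((i + m + p) % 2 = 0 ∧ m + p + 2 ≤ i ∧ i ≤ m + p + m + 2 ∧ j = i + 1)) :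
    gFun m p j < gFun m p i := by
  obtain ⟨yi, ei, hi⟩ := gFun_spec m p hme hm2 i h1 (by omega)
  obtain ⟨yj, ej, hj⟩ := gFun_spec m p hme hm2 j (by omega) h3
  rw [ei, ej]
  rcases hQ with hQ|hQ|hQ|hQ|hQ|hQ|hQ|hQ <;> omega

lemma mem_helper (m p : ℕ) (hme : m % 2 = 0) (hm2 : 2 ≤ m) (i j : ℕ)
    (h1 : 1 ≤ i) (h2 : i < j) (h3 : j ≤ 2 * m + p + 3)
    (hq : gFun m p j < gFun m p i) :
    rt i j ∈ DeltaSinv (2 * m + 2 + p) (weylS (2 * m + 2 + p) (2 * m + 2)) := by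
  constructor
  · exact ⟨i, j, h1, h2, by omega, rfl⟩
  · rw [pact_rt, sinv_eq m p hme hm2 i h1 (by omega), sinv_eq m p hme hm2 j (by omega) h3]
    rw [rt_mem_DeltaNeg (by omega)]
    have bi := gFun_bounds m p hme hm2 i h1 (by omega)
    have bj := gFun_bounds m p hme hm2 j (by omega) h3
    exact ⟨bj.1, hq, by omega⟩

/-- explicit description of Δ_{s⁻¹} in case (ii) (m even, l′ even). -/
theorem stmt4 (l l' m p : ℕ) (h5 : 5 ≤ l') (hll : l' ≤ l)
    (hm : m = (l' - 1) / 2) (hp : p = l - l')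
    (hme : m % 2 = 0) (hle : l' % 2 = 0) :
    DeltaSinv l (weylS l l') =
      {v | v = rt 1 3 ∨
        (∃ t, 1 ≤ t ∧ t ≤ (m - 2) / 2 ∧ v = rt (2 * t) (2 * t + 3)) ∨
        (∃ q, 1 ≤ q ∧ q ≤ p ∧ v = rt m (m + q + 1)) ∨
        v = rt m (m + p + 3) ∨
        (∃ i, m + 2 ≤ i ∧ i ≤ m + p + 2 ∧ v = rt i (m + p + 3)) ∨
        (∃ t, 1 ≤ t ∧ t ≤ m / 2 ∧ v = rt (m + p + 2 * t) (m + p + 2 * t + 3)) ∨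
        (∃ t, 1 ≤ t ∧ t ≤ m / 2 ∧ v = rt (2 * t) (2 * t + 1)) ∨
        (∃ t, 1 ≤ t ∧ t ≤ m / 2 + 1 ∧ v = rt (m + p + 2 * t) (m + p + 2 * t + 1))} := by
  have hl' : l' = 2 * m + 2 := by omega
  subst hl'
  have hl : l = 2 * m + 2 + p := by omega
  subst hl
  have hm2 : 2 ≤ m := by omega
  ext v
  simp only [Set.mem_setOf_eq]
  constructor
  · rintro ⟨⟨i, j, hi1, hij, hjl, rfl⟩, hneg⟩
    have hjl' : j ≤ 2 * m + p + 3 := by omega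
    rw [pact_rt, sinv_eq m p hme hm2 i hi1 (by omega),
        sinv_eq m p hme hm2 j (by omega) hjl'] at hneg
    have hne : gFun m p i ≠ gFun m p j := by
      rw [← sinv_eq m p hme hm2 i hi1 (by omega), ← sinv_eq m p hme hm2 j (by omega) hjl']
      intro h
      exact absurd ((weylS (2 * m + 2 + p) (2 * m + 2))⁻¹.injective h) (by omega)
    rw [rt_mem_DeltaNeg hne] at hneg
    have hQ := inv_mp m p hme hm2 i j hi1 hij hjl' hneg.2.1
    rcases hQ with ⟨rfl, rfl⟩ | ⟨he, h2i, him, rfl⟩ | ⟨heq, hj1, hj2⟩ | ⟨rfl, rfl⟩ |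
      ⟨ha, hb, rfl⟩ | ⟨he, h2i, him, rfl⟩ | ⟨he, h2i, him, rfl⟩ | ⟨he, h2i, him, rfl⟩
    · exact Or.inl rfl
    · refine Or.inr (Or.inl ⟨i / 2, by omega, by omega, ?_⟩)
      rw [show 2 * (i / 2) = i from by omega]
    · refine Or.inr (Or.inr (Or.inl ⟨j - m - 1, by omega, by omega, ?_⟩))
      rw [show m + (j - m - 1) + 1 = j from by omega, ← heq]
    · exact Or.inr (Or.inr (Or.inr (Or.inl rfl)))
    · exact Or.inr (Or.inr (Or.inr (Or.inr (Or.inl ⟨i, ha, hb, rfl⟩))))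
    · refine Or.inr (Or.inr (Or.inr (Or.inr (Or.inr (Or.inl
        ⟨(i - m - p) / 2, by omega, by omega, ?_⟩)))))
      rw [show m + p + 2 * ((i - m - p) / 2) = i from by omega]
    · refine Or.inr (Or.inr (Or.inr (Or.inr (Or.inr (Or.inr (Or.inl
        ⟨i / 2, by omega, by omega, ?_⟩))))))
      rw [show 2 * (i / 2) = i from by omega]
    · refine Or.inr (Or.inr (Or.inr (Or.inr (Or.inr (Or.inr (Or.inr
        ⟨(i - m - p) / 2, by omega, by omega, ?_⟩))))))
      rw [show m + p + 2 * ((i - m - p) / 2) = i from by omega]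
  · rintro (rfl | ⟨t, ht1, ht2, rfl⟩ | ⟨q, hq1, hq2, rfl⟩ | rfl | ⟨i, hi1, hi2, rfl⟩ |
      ⟨t, ht1, ht2, rfl⟩ | ⟨t, ht1, ht2, rfl⟩ | ⟨t, ht1, ht2, rfl⟩)
    · exact mem_helper m p hme hm2 1 3 (by omega) (by omega) (by omega)
        (inv_mpr m p hme hm2 1 3 (by omega) (by omega) (by omega)
          (Or.inl ⟨by omega, by omega⟩))
    · exact mem_helper m p hme hm2 (2 * t) (2 * t + 3) (by omega) (by omega) (by omega)
        (inv_mpr m p hme hm2 (2 * t) (2 * t + 3) (by omega) (by omega) (by omega)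
          (Or.inr (Or.inl ⟨by omega, by omega, by omega, by omega⟩)))
    · exact mem_helper m p hme hm2 m (m + q + 1) (by omega) (by omega) (by omega)
        (inv_mpr m p hme hm2 m (m + q + 1) (by omega) (by omega) (by omega)
          (Or.inr (Or.inr (Or.inl ⟨by omega, by omega, by omega⟩))))
    · exact mem_helper m p hme hm2 m (m + p + 3) (by omega) (by omega) (by omega)
        (inv_mpr m p hme hm2 m (m + p + 3) (by omega) (by omega) (by omega)
          (Or.inr (Or.inr (Or.inr (Or.inl ⟨by omega, by omega⟩)))))
    · exact mem_helper m p hme hm2 i (m + p + 3) (by omega) (by omega) (by omega)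
        (inv_mpr m p hme hm2 i (m + p + 3) (by omega) (by omega) (by omega)
          (Or.inr (Or.inr (Or.inr (Or.inr (Or.inl ⟨by omega, by omega, by omega⟩))))))
    · exact mem_helper m p hme hm2 (m + p + 2 * t) (m + p + 2 * t + 3) (by omega) (by omega) (by omega)
        (inv_mpr m p hme hm2 (m + p + 2 * t) (m + p + 2 * t + 3) (by omega) (by omega) (by omega)
          (Or.inr (Or.inr (Or.inr (Or.inr (Or.inr (Or.inl ⟨by omega, by omega, by omega, by omega⟩)))))))
    · exact mem_helper m p hme hm2 (2 * t) (2 * t + 1) (by omega) (by omega) (by omega)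
        (inv_mpr m p hme hm2 (2 * t) (2 * t + 1) (by omega) (by omega) (by omega)
          (Or.inr (Or.inr (Or.inr (Or.inr (Or.inr (Or.inr (Or.inl ⟨by omega, by omega, by omega, by omega⟩))))))))
    · exact mem_helper m p hme hm2 (m + p + 2 * t) (m + p + 2 * t + 1) (by omega) (by omega) (by omega)
        (inv_mpr m p hme hm2 (m + p + 2 * t) (m + p + 2 * t + 1) (by omega) (by omega) (by omega)
          (Or.inr (Or.inr (Or.inr (Or.inr (Or.inr (Or.inr (Or.inr (⟨by omega, by omega, by omega, by omega⟩)))))))))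

end DPW
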